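/- arXiv:2011.02945 — 2 statements merged into one kernel-verified Lean document; each statement's English description precedes it below -/
import Mathlib

section
/- Let A, B, C > 0, N ≥ 3, 2 < q < 2 + 4/N, γ_q = N(q-2)/(2q), 2* = 2N/(N-2), and suppose the function ψ(s) = (s²/2)A - (B/q)s^{qγ_q} - (s^{2*}/2*)C satisfies: ψ(s₀) > 0 for some s₀ > 0. Then ψ' has exactly two zeros 0 < s⁻ < s⁺, with s⁻ a local minimum point of ψ where ψ(s⁻) < 0, and s⁺ a global maximum point of ψ with ψ(s⁺) > 0 and ψ'(s) < 0 for all s > s⁺. -/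
open Set

private lemma fiber_aux (A K1 K2 a p : ℝ) (hA : 0 < A) (hK1 : 0 < K1) (hK2 : 0 < K2)
    (ha0 : 0 < a) (ha2 : a < 2) (hp : 2 < p)
    (ψ dψ : ℝ → ℝ)
    (hψ : ∀ s : ℝ, 0 < s → ψ s = A / 2 * s ^ (2:ℝ) - K1 / a * s ^ a - K2 / p * s ^ p)
    (hdψ : ∀ s : ℝ, 0 < s → dψ s = s * A - K1 * s ^ (a-1) - K2 * s ^ (p-1))
    (s₀ : ℝ) (hs₀ : 0 < s₀) (hpos : 0 < ψ s₀) :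
    ∃ sm sp : ℝ, 0 < sm ∧ sm < sp ∧
      (∀ s : ℝ, 0 < s → (dψ s = 0 ↔ s = sm ∨ s = sp)) ∧
      IsLocalMin ψ sm ∧ ψ sm < 0 ∧
      (∀ s : ℝ, 0 < s → ψ s ≤ ψ sp) ∧ 0 < ψ sp ∧
      (∀ s : ℝ, sp < s → dψ s < 0) := by
  have hp0 : (0:ℝ) < p := by linarith
  set g : ℝ → ℝ := fun s => A - K1 * s ^ (a-2) - K2 * s ^ (p-2) with hgdef
  -- dψ s = s * g s
  have hdg : ∀ s : ℝ, 0 < s → dψ s = s * g s := by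
    intro s hs
    have h1 : s ^ (a-1) = s * s ^ (a-2) := by
      rw [show a - 1 = 1 + (a-2) by ring, Real.rpow_add hs, Real.rpow_one]
    have h2 : s ^ (p-1) = s * s ^ (p-2) := by
      rw [show p - 1 = 1 + (p-2) by ring, Real.rpow_add hs, Real.rpow_one]
    rw [hdψ s hs, h1, h2, hgdef]; ring
  -- ψ has derivative dψ on (0,∞)
  have hψ' : ∀ s : ℝ, 0 < s → HasDerivAt ψ (dψ s) s := by
    intro s hs
    have h1 : HasDerivAt (fun x : ℝ => A / 2 * x ^ (2:ℝ))
        (A / 2 * ((2:ℝ) * s ^ ((2:ℝ) - 1))) s :=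
      (Real.hasDerivAt_rpow_const (Or.inl hs.ne')).const_mul _
    have h2 : HasDerivAt (fun x : ℝ => K1 / a * x ^ a) (K1 / a * (a * s ^ (a - 1))) s :=
      (Real.hasDerivAt_rpow_const (Or.inl hs.ne')).const_mul _
    have h3 : HasDerivAt (fun x : ℝ => K2 / p * x ^ p) (K2 / p * (p * s ^ (p - 1))) s :=
      (Real.hasDerivAt_rpow_const (Or.inl hs.ne')).const_mul _
    have hF : HasDerivAt (fun x : ℝ => A / 2 * x ^ (2:ℝ) - K1 / a * x ^ a - K2 / p * x ^ p)
        (A / 2 * ((2:ℝ) * s ^ ((2:ℝ) - 1)) - K1 / a * (a * s ^ (a - 1))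
          - K2 / p * (p * s ^ (p - 1))) s := (h1.sub h2).sub h3
    have heq : ψ =ᶠ[nhds s] (fun x : ℝ => A / 2 * x ^ (2:ℝ) - K1 / a * x ^ a - K2 / p * x ^ p) := by
      filter_upwards [isOpen_Ioi.mem_nhds (show s ∈ Ioi 0 from hs)] with x hx
      exact hψ x hx
    have hval : A / 2 * ((2:ℝ) * s ^ ((2:ℝ) - 1)) - K1 / a * (a * s ^ (a - 1))
          - K2 / p * (p * s ^ (p - 1)) = dψ s := by
      rw [hdψ s hs, show (2:ℝ) - 1 = 1 by norm_num, Real.rpow_one]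
      field_simp
    rw [← hval]
    exact hF.congr_of_eventuallyEq heq
  -- derivative of g
  have hg' : ∀ s : ℝ, 0 < s →
      HasDerivAt g (K1 * (2-a) * s ^ (a-3) - K2 * (p-2) * s ^ (p-3)) s := by
    intro s hs
    have h1 : HasDerivAt (fun x : ℝ => K1 * x ^ (a-2)) (K1 * ((a-2) * s ^ (a-2-1))) s :=
      (Real.hasDerivAt_rpow_const (Or.inl hs.ne')).const_mul _
    have h2 : HasDerivAt (fun x : ℝ => K2 * x ^ (p-2)) (K2 * ((p-2) * s ^ (p-2-1))) s :=
      (Real.hasDerivAt_rpow_const (Or.inl hs.ne')).const_mul _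
    have := ((hasDerivAt_const s A).sub h1).sub h2
    refine this.congr_deriv ?_
    rw [show a - 2 - 1 = a - 3 by ring, show p - 2 - 1 = p - 3 by ring]
    ring
  have hpa : 0 < p - a := by linarith
  set R : ℝ := K1 * (2-a) / (K2 * (p-2)) with hRdef
  have hR : 0 < R := by
    apply div_pos <;> nlinarith
  set st : ℝ := R ^ ((p-a)⁻¹ : ℝ) with hstdef
  have hst : 0 < st := Real.rpow_pos_of_pos hR _
  have hstpow : st ^ (p-a) = R := by
    rw [hstdef, ← Real.rpow_mul hR.le, inv_mul_cancel₀ hpa.ne', Real.rpow_one]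
  -- sign of the derivative of g
  have hsplit : ∀ s : ℝ, 0 < s → K1 * (2-a) * s ^ (a-3) - K2 * (p-2) * s ^ (p-3)
      = s ^ (a-3) * (K1 * (2-a) - K2 * (p-2) * s ^ (p-a)) := by
    intro s hs
    have : s ^ (p-3) = s ^ (a-3) * s ^ (p-a) := by
      rw [← Real.rpow_add hs]; ring_nf
    rw [this]; ring
  have hKK : K2 * (p-2) * R = K1 * (2-a) := by
    have h1 : K2 ≠ 0 := hK2.ne'
    have h2 : p - 2 ≠ 0 := ne_of_gt (by linarith)
    rw [hRdef]
    field_simp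
  -- g strictly increasing on (0, st], strictly decreasing on [st, ∞)
  have gcont : ∀ s : ℝ, 0 < s → ContinuousAt g s := fun s hs => (hg' s hs).continuousAt
  have gmono : StrictMonoOn g (Ioc 0 st) := by
    apply strictMonoOn_of_deriv_pos (convex_Ioc 0 st)
    · exact fun s hs => (gcont s hs.1).continuousWithinAt
    · rw [interior_Ioc]
      intro s hs
      rw [(hg' s hs.1).deriv, hsplit s hs.1]
      have h1 : s ^ (p-a) < R := by
        rw [← hstpow]; exact Real.rpow_lt_rpow hs.1.le hs.2 hpa
      have h2 : K2 * (p-2) * s ^ (p-a) < K1 * (2-a) := by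
        rw [← hKK]
        exact mul_lt_mul_of_pos_left h1 (by nlinarith)
      exact mul_pos (Real.rpow_pos_of_pos hs.1 _) (by linarith)
  have ganti : StrictAntiOn g (Ici st) := by
    apply strictAntiOn_of_deriv_neg (convex_Ici st)
    · exact fun s hs => (gcont s (lt_of_lt_of_le hst hs)).continuousWithinAt
    · rw [interior_Ici]
      intro s hs
      have hs0 : 0 < s := lt_trans hst hs
      rw [(hg' s hs0).deriv, hsplit s hs0]
      have h1 : R < s ^ (p-a) := by
        rw [← hstpow]; exact Real.rpow_lt_rpow hst.le hs hpa
      have h2 : K1 * (2-a) < K2 * (p-2) * s ^ (p-a) := by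
        rw [← hKK]
        exact mul_lt_mul_of_pos_left h1 (by nlinarith)
      exact mul_neg_of_pos_of_neg (Real.rpow_pos_of_pos hs0 _) (by linarith)
  have gmax : ∀ s : ℝ, 0 < s → g s ≤ g st := by
    intro s hs
    rcases le_total s st with h | h
    · rcases eq_or_lt_of_le h with rfl | h'
      · exact le_rfl
      · exact (gmono ⟨hs, h⟩ ⟨hst, le_rfl⟩ h').le
    · rcases eq_or_lt_of_le h with rfl | h'
      · exact le_rfl
      · exact (ganti (mem_Ici.2 le_rfl) h h').le
  -- ψ is bounded above by the quadratic term
  have hψle : ∀ t : ℝ, 0 < t → ψ t ≤ A / 2 * t ^ (2:ℝ) := by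
    intro t ht
    rw [hψ t ht]
    have h1 : 0 ≤ K1 / a * t ^ a := by positivity
    have h2 : 0 ≤ K2 / p * t ^ p := by positivity
    linarith
  -- small points where the quadratic bound is tiny
  have hexists_small : ∀ s val : ℝ, 0 < s → 0 < val →
      ∃ t : ℝ, 0 < t ∧ t ≤ s ∧ A / 2 * t ^ (2:ℝ) < val := by
    intro s val hs hval
    set δ := Real.sqrt (val / A) with hδdef
    have hδ : 0 < δ := Real.sqrt_pos.2 (by positivity)
    refine ⟨min s δ, lt_min hs hδ, min_le_left _ _, ?_⟩
    have h0 : 0 ≤ min s δ := (lt_min hs hδ).le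
    have ht2 : (min s δ) ^ (2:ℝ) = min s δ * min s δ := by
      rw [show (2:ℝ) = ((2:ℕ):ℝ) by norm_num, Real.rpow_natCast]; ring
    rw [ht2]
    have h1 : min s δ * min s δ ≤ δ * δ :=
      mul_le_mul (min_le_right _ _) (min_le_right _ _) h0 hδ.le
    have hδδ : δ * δ = val / A := Real.mul_self_sqrt (by positivity)
    calc A / 2 * (min s δ * min s δ) ≤ A / 2 * (val / A) := by
          rw [← hδδ]; exact mul_le_mul_of_nonneg_left h1 (by positivity)
      _ = val / 2 := by field_simp
      _ < val := by linarith
  -- max of g is positive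
  have hgst : 0 < g st := by
    by_contra hcon
    push_neg at hcon
    have hanti : AntitoneOn ψ (Ioi 0) := by
      apply antitoneOn_of_deriv_nonpos (convex_Ioi 0)
      · exact fun s hs => (hψ' s hs).continuousAt.continuousWithinAt
      · rw [interior_Ioi]
        exact fun s hs => (hψ' s hs).differentiableAt.differentiableWithinAt
      · rw [interior_Ioi]
        intro s hs
        rw [(hψ' s hs).deriv, hdg s hs]
        exact mul_nonpos_of_nonneg_of_nonpos (le_of_lt hs) (le_trans (gmax s hs) hcon)
    obtain ⟨t, ht0, hts, htv⟩ := hexists_small s₀ (ψ s₀) hs₀ hpos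
    have h1 : ψ s₀ ≤ ψ t := hanti (mem_Ioi.2 ht0) (mem_Ioi.2 hs₀) hts
    have h2 := hψle t ht0
    linarith
  -- find a small point where g is negative
  have h2a : (0:ℝ) < 2 - a := by linarith
  have hgsmall : ∃ ε : ℝ, 0 < ε ∧ ε < st ∧ g ε < 0 := by
    set c : ℝ := (K1 / A) ^ ((2-a)⁻¹ : ℝ) with hcdef
    have hc : 0 < c := Real.rpow_pos_of_pos (by positivity) _
    set ε := min (st/2) (c/2) with hεdef
    have hε0 : 0 < ε := lt_min (by linarith) (by linarith)
    refine ⟨ε, hε0, lt_of_le_of_lt (min_le_left _ _) (by linarith), ?_⟩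
    have hεc : ε < c := lt_of_le_of_lt (min_le_right _ _) (by linarith)
    have hcpow : c ^ (2-a) = K1 / A := by
      rw [hcdef, ← Real.rpow_mul (by positivity : (0:ℝ) ≤ K1 / A),
        inv_mul_cancel₀ h2a.ne', Real.rpow_one]
    have hpow : ε ^ (2-a) < K1 / A := by
      rw [← hcpow]; exact Real.rpow_lt_rpow hε0.le hεc h2a
    have hx : 0 < ε ^ (2-a) := Real.rpow_pos_of_pos hε0 _
    have hinv : ε ^ (a-2) = (ε ^ (2-a))⁻¹ := by
      rw [show a - 2 = -(2-a) by ring, Real.rpow_neg hε0.le]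
    have hAK : A < K1 * ε ^ (a-2) := by
      rw [hinv, lt_mul_inv_iff₀ hx]
      calc A * ε ^ (2-a) < A * (K1 / A) := mul_lt_mul_of_pos_left hpow hA
        _ = K1 := by field_simp
    have hterm : 0 < K2 * ε ^ (p-2) := by positivity
    show A - K1 * ε ^ (a-2) - K2 * ε ^ (p-2) < 0
    linarith
  -- find a large point where g is negative
  have hp2 : (0:ℝ) < p - 2 := by linarith
  have hgbig : ∃ M : ℝ, st < M ∧ g M < 0 := by
    set c : ℝ := (A / K2) ^ ((p-2)⁻¹ : ℝ) with hcdef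
    have hc : 0 < c := Real.rpow_pos_of_pos (by positivity) _
    set M := max (st+1) (c+1) with hMdef
    have hMst : st < M := lt_of_lt_of_le (lt_add_one st) (le_max_left _ _)
    have hM0 : 0 < M := lt_trans hst hMst
    have hMc : c < M := lt_of_lt_of_le (lt_add_one c) (le_max_right _ _)
    refine ⟨M, hMst, ?_⟩
    have hcpow : c ^ (p-2) = A / K2 := by
      rw [hcdef, ← Real.rpow_mul (by positivity : (0:ℝ) ≤ A / K2),
        inv_mul_cancel₀ hp2.ne', Real.rpow_one]
    have hpow : A / K2 < M ^ (p-2) := by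
      rw [← hcpow]; exact Real.rpow_lt_rpow hc.le hMc hp2
    have hAK : A < K2 * M ^ (p-2) := by
      rw [← mul_div_cancel₀ A hK2.ne'] at hpow
      calc A = K2 * (A / K2) := by field_simp
        _ < K2 * M ^ (p-2) := by
            apply mul_lt_mul_of_pos_left _ hK2
            rw [← hcpow]; exact Real.rpow_lt_rpow hc.le hMc hp2
    have hterm : 0 < K1 * M ^ (a-2) := by positivity
    show A - K1 * M ^ (a-2) - K2 * M ^ (p-2) < 0
    linarith
  obtain ⟨ε, hε0, hεst, hgε⟩ := hgsmall
  obtain ⟨M, hstM, hgM⟩ := hgbig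
  -- zeros of g via IVT
  obtain ⟨sm, hsmIcc, hgsm⟩ : ∃ sm ∈ Icc ε st, g sm = 0 := by
    have hcont : ContinuousOn g (Icc ε st) := fun s hs =>
      (gcont s (lt_of_lt_of_le hε0 hs.1)).continuousWithinAt
    have := intermediate_value_Icc hεst.le hcont ⟨hgε.le, hgst.le⟩
    obtain ⟨sm, h1, h2⟩ := this
    exact ⟨sm, h1, h2⟩
  obtain ⟨sp, hspIcc, hgsp⟩ : ∃ sp ∈ Icc st M, g sp = 0 := by
    have hcont : ContinuousOn g (Icc st M) := fun s hs =>
      (gcont s (lt_of_lt_of_le hst hs.1)).continuousWithinAt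
    have := intermediate_value_Icc' hstM.le hcont ⟨hgM.le, hgst.le⟩
    obtain ⟨sp, h1, h2⟩ := this
    exact ⟨sp, h1, h2⟩
  have hsm0 : 0 < sm := lt_of_lt_of_le hε0 hsmIcc.1
  have hsmst : sm < st := lt_of_le_of_ne hsmIcc.2 (fun h => by rw [h] at hgsm; linarith)
  have hstsp : st < sp := lt_of_le_of_ne hspIcc.1
    (fun h => by rw [h, hgsp] at hgst; exact lt_irrefl 0 hgst)
  have hsmsp : sm < sp := lt_trans hsmst hstsp
  have hsp0 : 0 < sp := lt_trans hst hstsp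
  -- sign of g
  have hgneg1 : ∀ s : ℝ, 0 < s → s < sm → g s < 0 := by
    intro s hs h
    have := gmono ⟨hs, le_of_lt (lt_trans h hsmst)⟩ ⟨hsm0, hsmst.le⟩ h
    rw [hgsm] at this; exact this
  have hgpos : ∀ s : ℝ, sm < s → s < sp → 0 < g s := by
    intro s h1 h2
    rcases le_total s st with h | h
    · have := gmono ⟨hsm0, hsmst.le⟩ ⟨lt_trans hsm0 h1, h⟩ h1
      rw [hgsm] at this; exact this
    · have := ganti (mem_Ici.2 h) (mem_Ici.2 (le_trans h h2.le)) h2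
      rw [hgsp] at this; exact this
  have hgneg2 : ∀ s : ℝ, sp < s → g s < 0 := by
    intro s h
    have := ganti (mem_Ici.2 hstsp.le) (mem_Ici.2 (le_trans hstsp.le h.le)) h
    rw [hgsp] at this; exact this
  -- monotonicity of ψ
  have ψanti1 : StrictAntiOn ψ (Ioc 0 sm) := by
    apply strictAntiOn_of_deriv_neg (convex_Ioc 0 sm)
    · exact fun s hs => (hψ' s hs.1).continuousAt.continuousWithinAt
    · rw [interior_Ioc]
      intro s hs
      rw [(hψ' s hs.1).deriv, hdg s hs.1]
      exact mul_neg_of_pos_of_neg hs.1 (hgneg1 s hs.1 hs.2)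
  have ψmono : StrictMonoOn ψ (Icc sm sp) := by
    apply strictMonoOn_of_deriv_pos (convex_Icc sm sp)
    · exact fun s hs => (hψ' s (lt_of_lt_of_le hsm0 hs.1)).continuousAt.continuousWithinAt
    · rw [interior_Icc]
      intro s hs
      have hs0 : 0 < s := lt_trans hsm0 hs.1
      rw [(hψ' s hs0).deriv, hdg s hs0]
      exact mul_pos hs0 (hgpos s hs.1 hs.2)
  have ψanti2 : StrictAntiOn ψ (Ici sp) := by
    apply strictAntiOn_of_deriv_neg (convex_Ici sp)
    · exact fun s hs => (hψ' s (lt_of_lt_of_le hsp0 hs)).continuousAt.continuousWithinAt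
    · rw [interior_Ici]
      intro s hs
      have hs0 : 0 < s := lt_trans hsp0 hs
      rw [(hψ' s hs0).deriv, hdg s hs0]
      exact mul_neg_of_pos_of_neg hs0 (hgneg2 s hs)
  -- ψ nonpositive on (0, sm]
  have hψnonpos : ∀ s : ℝ, 0 < s → s ≤ sm → ψ s ≤ 0 := by
    intro s hs hssm
    by_contra hcon
    push_neg at hcon
    obtain ⟨t, ht0, hts, htv⟩ := hexists_small s (ψ s) hs hcon
    have h1 : ψ s ≤ ψ t := by
      rcases eq_or_lt_of_le hts with rfl | h
      · exact le_rfl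
      · exact (ψanti1 ⟨ht0, le_trans hts hssm⟩ ⟨hs, hssm⟩ h).le
    have h2 := hψle t ht0
    linarith
  have hψsm : ψ sm < 0 := by
    have h1 : ψ sm < ψ (sm/2) :=
      ψanti1 ⟨half_pos hsm0, (half_le_self hsm0.le)⟩ ⟨hsm0, le_rfl⟩ (half_lt_self hsm0)
    have h2 := hψnonpos (sm/2) (half_pos hsm0) (half_le_self hsm0.le)
    linarith
  have hs₀sm : sm < s₀ := by
    by_contra hcon
    push_neg at hcon
    have := hψnonpos s₀ hs₀ hcon
    linarith
  have hψsp : 0 < ψ sp := by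
    rcases le_total s₀ sp with h | h
    · have : ψ s₀ ≤ ψ sp := by
        rcases eq_or_lt_of_le h with rfl | h'
        · exact le_rfl
        · exact (ψmono ⟨hs₀sm.le, h⟩ ⟨hsmsp.le, le_rfl⟩ h').le
      linarith
    · have : ψ s₀ ≤ ψ sp := by
        rcases eq_or_lt_of_le h with rfl | h'
        · exact le_rfl
        · exact (ψanti2 (mem_Ici.2 le_rfl) h h').le
      linarith
  have hglobal : ∀ s : ℝ, 0 < s → ψ s ≤ ψ sp := by
    intro s hs
    rcases le_total s sm with h | h
    · have := hψnonpos s hs h; linarith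
    · rcases le_total s sp with h2 | h2
      · rcases eq_or_lt_of_le h2 with rfl | h'
        · exact le_rfl
        · exact (ψmono ⟨h, h2⟩ ⟨hsmsp.le, le_rfl⟩ h').le
      · rcases eq_or_lt_of_le h2 with rfl | h'
        · exact le_rfl
        · exact (ψanti2 (mem_Ici.2 le_rfl) h2 h').le
  have hlocmin : IsLocalMin ψ sm := by
    have hmem : Ioo (sm/2) sp ∈ nhds sm := Ioo_mem_nhds (half_lt_self hsm0) hsmsp
    filter_upwards [hmem] with s hs
    rcases le_total s sm with h | h
    · rcases eq_or_lt_of_le h with rfl | h'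
      · exact le_rfl
      · exact (ψanti1 ⟨lt_trans (half_pos hsm0) hs.1, h⟩ ⟨hsm0, le_rfl⟩ h').le
    · rcases eq_or_lt_of_le h with rfl | h'
      · exact le_rfl
      · exact (ψmono ⟨le_rfl, hsmsp.le⟩ ⟨h, hs.2.le⟩ h').le
  have hzeros : ∀ s : ℝ, 0 < s → (dψ s = 0 ↔ s = sm ∨ s = sp) := by
    intro s hs
    rw [hdg s hs]
    constructor
    · intro h
      have hgs : g s = 0 := by
        rcases mul_eq_zero.1 h with h' | h'
        · exact absurd h' hs.ne'
        · exact h'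
      rcases lt_trichotomy s sm with h1 | h1 | h1
      · exact absurd hgs (hgneg1 s hs h1).ne
      · exact Or.inl h1
      · rcases lt_trichotomy s sp with h2 | h2 | h2
        · exact absurd hgs (hgpos s h1 h2).ne'
        · exact Or.inr h2
        · exact absurd hgs (hgneg2 s h2).ne
    · rintro (rfl | rfl)
      · rw [hgsm, mul_zero]
      · rw [hgsp, mul_zero]
  have hfinal : ∀ s : ℝ, sp < s → dψ s < 0 := by
    intro s h
    have hs0 : 0 < s := lt_trans hsp0 h
    rw [hdg s hs0]
    exact mul_neg_of_pos_of_neg hs0 (hgneg2 s h)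
  exact ⟨sm, sp, hsm0, hsmsp, hzeros, hlocmin, hψsm, hglobal, hψsp, hfinal⟩

/-- Fiber map dichotomy: if `ψ(s₀) > 0` for some `s₀ > 0`, then `ψ'` has exactly two zeros
`0 < s⁻ < s⁺`, `s⁻` is a local minimum point of `ψ` with `ψ(s⁻) < 0`, `s⁺` is a global
maximum point of `ψ` on `(0, ∞)` with `ψ(s⁺) > 0`, and `ψ'(s) < 0` for all `s > s⁺`. -/
theorem stmt_3 (N : ℕ) (hN : 3 ≤ N) (A B C q : ℝ)
    (hA : 0 < A) (hB : 0 < B) (hC : 0 < C)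
    (hq1 : 2 < q) (hq2 : q < 2 + 4 / N)
    (ψ dψ : ℝ → ℝ)
    (hψ : ∀ s : ℝ, 0 < s →
      ψ s = s ^ (2 : ℝ) / 2 * A - B / q * s ^ (q * (N * (q - 2) / (2 * q)))
              - s ^ (2 * N / ((N : ℝ) - 2)) / (2 * N / ((N : ℝ) - 2)) * C)
    (hdψ : ∀ s : ℝ, 0 < s →
      dψ s = s * A - B * (N * (q - 2) / (2 * q)) * s ^ (q * (N * (q - 2) / (2 * q)) - 1)
              - C * s ^ (2 * N / ((N : ℝ) - 2) - 1))
    (s₀ : ℝ) (hs₀ : 0 < s₀) (hpos : 0 < ψ s₀) :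
    ∃ sm sp : ℝ, 0 < sm ∧ sm < sp ∧
      (∀ s : ℝ, 0 < s → (dψ s = 0 ↔ s = sm ∨ s = sp)) ∧
      IsLocalMin ψ sm ∧ ψ sm < 0 ∧
      (∀ s : ℝ, 0 < s → ψ s ≤ ψ sp) ∧ 0 < ψ sp ∧
      (∀ s : ℝ, sp < s → dψ s < 0) := by
  have hq0 : (0:ℝ) < q := by linarith
  have hNr : (3:ℝ) ≤ (N:ℝ) := by exact_mod_cast hN
  have hN0 : (0:ℝ) < (N:ℝ) := by linarith
  have hN2 : (0:ℝ) < (N:ℝ) - 2 := by linarith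
  have hγ : 0 < (N:ℝ) * (q - 2) / (2 * q) := by apply div_pos <;> nlinarith
  have ha0 : 0 < q * ((N:ℝ) * (q - 2) / (2 * q)) := mul_pos hq0 hγ
  have haeq : q * ((N:ℝ) * (q - 2) / (2 * q)) = (N:ℝ) * (q - 2) / 2 := by
    field_simp
  have ha2 : q * ((N:ℝ) * (q - 2) / (2 * q)) < 2 := by
    rw [haeq]
    have h4 : (q - 2) * (N:ℝ) < 4 := (lt_div_iff₀ hN0).1 (by linarith : q - 2 < 4 / (N:ℝ))
    nlinarith
  have hp : 2 < 2 * (N:ℝ) / ((N:ℝ) - 2) := by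
    rw [lt_div_iff₀ hN2]; linarith
  refine fiber_aux A (B * ((N:ℝ) * (q - 2) / (2 * q))) C
    (q * ((N:ℝ) * (q - 2) / (2 * q))) (2 * (N:ℝ) / ((N:ℝ) - 2))
    hA (mul_pos hB hγ) hC ha0 ha2 hp ψ dψ ?_ ?_ s₀ hs₀ hpos
  · intro s hs
    rw [hψ s hs]
    have e1 : B * ((N:ℝ) * (q - 2) / (2 * q)) / (q * ((N:ℝ) * (q - 2) / (2 * q))) = B / q :=
      mul_div_mul_right _ _ hγ.ne'
    rw [e1]
    ring
  · intro s hs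
    rw [hdψ s hs]
end

section
/- Let N ≥ 3, 2 < q < 2 + 4/N, γ_q = N(q-2)/(2q), 2* = 2N/(N-2). If qγ_q > 1, then the function ψ''(s) = A - Bγ_q(qγ_q - 1)s^{qγ_q - 2} - C(2* - 1)s^{2* - 2} (with A, B, C > 0) has at most two zeros on (0,∞). -/
/-- A positive combination of two exponentials is strictly convex. -/
lemma aux_strictConvex (B' C' a b : ℝ) (hB : 0 < B') (hC : 0 < C')
    (ha : a ≠ 0) (hb : b ≠ 0) :
    StrictConvexOn ℝ Set.univ
      (fun t : ℝ => B' * Real.exp (a * t) + C' * Real.exp (b * t)) := by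
  refine ⟨convex_univ, ?_⟩
  intro x _ y _ hxy p r hp hr hpr
  have hax : a * x ≠ a * y := fun h => hxy (mul_left_cancel₀ ha h)
  have hbx : b * x ≠ b * y := fun h => hxy (mul_left_cancel₀ hb h)
  have e1 := strictConvexOn_exp.2 (Set.mem_univ (a * x)) (Set.mem_univ (a * y)) hax hp hr hpr
  have e2 := strictConvexOn_exp.2 (Set.mem_univ (b * x)) (Set.mem_univ (b * y)) hbx hp hr hpr
  simp only [smul_eq_mul] at e1 e2 ⊢
  have h1 : a * (p * x + r * y) = p * (a * x) + r * (a * y) := by ring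
  have h2 : b * (p * x + r * y) = p * (b * x) + r * (b * y) := by ring
  rw [h1, h2]
  nlinarith [e1, e2]

/-- A strictly convex function cannot take the same value at three ordered points. -/
lemma aux_three_lt {f : ℝ → ℝ} (hf : StrictConvexOn ℝ Set.univ f) {A x y z : ℝ}
    (hxy : x < y) (hyz : y < z) (hx : f x = A) (hy : f y = A) (hz : f z = A) : False := by
  have hxz : x ≠ z := ne_of_lt (hxy.trans hyz)
  have hzx : (0:ℝ) < z - x := by linarith
  set α := (z - y) / (z - x) with hαdef
  set β := (y - x) / (z - x) with hβdef
  have hα : 0 < α := div_pos (by linarith) hzx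
  have hβ : 0 < β := div_pos (by linarith) hzx
  have hsum : α + β = 1 := by
    rw [hαdef, hβdef]
    field_simp
    ring
  have hcomb : α • x + β • z = y := by
    simp only [smul_eq_mul, hαdef, hβdef]
    field_simp
    ring
  have hlt := hf.2 (Set.mem_univ x) (Set.mem_univ z) hxz hα hβ hsum
  rw [hcomb, hx, hz, hy] at hlt
  simp only [smul_eq_mul] at hlt
  have heq : α * A + β * A = A := by rw [← add_mul, hsum, one_mul]
  linarith

/-- A strictly convex function cannot take the same value at three distinct points. -/
lemma aux_three {f : ℝ → ℝ} (hf : StrictConvexOn ℝ Set.univ f) {A x y z : ℝ}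
    (hxy : x ≠ y) (hxz : x ≠ z) (hyz : y ≠ z)
    (hx : f x = A) (hy : f y = A) (hz : f z = A) : False := by
  rcases hxy.lt_or_gt with h1 | h1 <;> rcases hxz.lt_or_gt with h2 | h2 <;>
    rcases hyz.lt_or_gt with h3 | h3
  · exact aux_three_lt hf h1 h3 hx hy hz
  · exact aux_three_lt hf h2 h3 hx hz hy
  · exact absurd (h3.trans (h2.trans h1)) (lt_irrefl _)
  · exact aux_three_lt hf h2 h1 hz hx hy
  · exact aux_three_lt hf h1 h2 hy hx hz
  · exact absurd (h2.trans (h3.trans h1)) (lt_irrefl _)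
  · exact aux_three_lt hf h3 h2 hy hz hx
  · exact aux_three_lt hf h3 h1 hz hy hx

/-- If `qγ_q > 1`, the function
`ψ''(s) = A - Bγ_q(qγ_q - 1)s^(qγ_q - 2) - C(2* - 1)s^(2* - 2)` has at most two zeros
on `(0, ∞)`. -/
theorem stmt_4 (N : ℕ) (hN : 3 ≤ N) (A B C q : ℝ)
    (hA : 0 < A) (hB : 0 < B) (hC : 0 < C)
    (hq1 : 2 < q) (hq2 : q < 2 + 4 / N)
    (hqγ : 1 < q * (N * (q - 2) / (2 * q)))
    (ψ'' : ℝ → ℝ)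
    (hψ'' : ∀ s : ℝ, 0 < s →
      ψ'' s = A
        - B * (N * (q - 2) / (2 * q)) * (q * (N * (q - 2) / (2 * q)) - 1)
            * s ^ (q * (N * (q - 2) / (2 * q)) - 2)
        - C * (2 * N / ((N : ℝ) - 2) - 1) * s ^ (2 * N / ((N : ℝ) - 2) - 2)) :
    ∀ s₁ s₂ s₃ : ℝ, 0 < s₁ → 0 < s₂ → 0 < s₃ →
      ψ'' s₁ = 0 → ψ'' s₂ = 0 → ψ'' s₃ = 0 →
      s₁ = s₂ ∨ s₁ = s₃ ∨ s₂ = s₃ := by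
  intro s₁ s₂ s₃ h₁ h₂ h₃ z₁ z₂ z₃
  by_contra hcon
  push_neg at hcon
  obtain ⟨ne12, ne13, ne23⟩ := hcon
  have hN3 : (3:ℝ) ≤ (N:ℝ) := by exact_mod_cast hN
  have hNpos : (0:ℝ) < (N:ℝ) := by linarith
  have hq0 : (0:ℝ) < q := by linarith
  set E : ℝ := (N:ℝ) * (q - 2) / (2 * q) with hEdef
  set a : ℝ := q * E - 2 with hadef
  set b : ℝ := 2 * (N:ℝ) / ((N:ℝ) - 2) - 2 with hbdef
  set B' : ℝ := B * E * (q * E - 1) with hB'def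
  set C' : ℝ := C * (2 * (N:ℝ) / ((N:ℝ) - 2) - 1) with hC'def
  have hEpos : 0 < E := by
    apply div_pos
    · nlinarith
    · linarith
  have hB'pos : 0 < B' := by
    apply mul_pos (mul_pos hB hEpos)
    linarith [hqγ]
  have h2star : 2 < 2 * (N:ℝ) / ((N:ℝ) - 2) := by
    rw [lt_div_iff₀ (by linarith : (0:ℝ) < (N:ℝ) - 2)]
    linarith
  have hC'pos : 0 < C' := by
    apply mul_pos hC
    linarith
  have hqE : q * E = (N:ℝ) * (q - 2) / 2 := by
    rw [hEdef]
    field_simp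
  have hNq4 : (N:ℝ) * (q - 2) < 4 := by
    have h4 : q - 2 < 4 / (N:ℝ) := by linarith
    have := (lt_div_iff₀ hNpos).mp h4
    nlinarith
  have ha : a < 0 := by
    rw [hadef, hqE]; linarith
  have ha0 : a ≠ 0 := ne_of_lt ha
  have hb : 0 < b := by rw [hbdef]; linarith
  have hb0 : b ≠ 0 := ne_of_gt hb
  -- the convex exponential model
  set f : ℝ → ℝ := fun t : ℝ => B' * Real.exp (a * t) + C' * Real.exp (b * t) with hfdef
  have hfconv : StrictConvexOn ℝ Set.univ f :=
    aux_strictConvex B' C' a b hB'pos hC'pos ha0 hb0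
  have key : ∀ s : ℝ, 0 < s → ψ'' s = 0 → f (Real.log s) = A := by
    intro s hs hz
    have h := hψ'' s hs
    rw [hz] at h
    have hra : s ^ a = Real.exp (a * Real.log s) := by
      rw [Real.rpow_def_of_pos hs, mul_comm]
    have hrb : s ^ b = Real.exp (b * Real.log s) := by
      rw [Real.rpow_def_of_pos hs, mul_comm]
    rw [hfdef]
    simp only []
    rw [← hra, ← hrb]
    rw [hadef, hbdef] at *
    linarith [h]
  have k1 := key s₁ h₁ z₁
  have k2 := key s₂ h₂ z₂
  have k3 := key s₃ h₃ z₃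
  have t12 : Real.log s₁ ≠ Real.log s₂ := fun h =>
    ne12 (by rw [← Real.exp_log h₁, ← Real.exp_log h₂, h])
  have t13 : Real.log s₁ ≠ Real.log s₃ := fun h =>
    ne13 (by rw [← Real.exp_log h₁, ← Real.exp_log h₃, h])
  have t23 : Real.log s₂ ≠ Real.log s₃ := fun h =>
    ne23 (by rw [← Real.exp_log h₂, ← Real.exp_log h₃, h])
  exact aux_three hfconv t12 t13 t23 k1 k2 k3
end
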